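/- Let π : X̃→X, with deck group Γ, be a regular covering of a connected, locally finite weighted graph (X,b,m), and let p, p̃ be nonnegative kernels satisfying the covering identity p_t(x,y) = ∑_{ỹ∈π⁻¹(y)} p̃_t(x̃,ỹ) for all t>0, x,y∈X, x̃∈π⁻¹(x). Define the Green's functions g(x,x) = ∫₀^∞ p_t(x,x) dt and g̃(x̃,x̃) = ∫₀^∞ p̃_t(x̃,x̃) dt. (a) g̃(x̃,x̃) ≤ g(π(x̃),π(x̃)) for every x̃∈X̃; hence if there is C>0 with g(x,x) ≤ C for all x∈X (the base is uniformly transient), then g̃(x̃,x̃) ≤ C for all x̃∈X̃ (the cover is uniformly transient). (b) If moreover every fiber has exactly n<∞ elements, p̃ is Γ-invariant, and p̃ is positive semidefinite (∑_{ã,b̃} p̃_t(ã,b̃)f(ã)f(b̃)m̃(ã)m̃(b̃) ≥ 0 for all finitely supported f), then g(x,x) ≤ n·g̃(x̃,x̃) for x̃∈π⁻¹(x); hence if g̃(x̃,x̃) ≤ C for all x̃, then g(x,x) ≤ n·C for all x∈X. -/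

import Mathlib

open Filter Topology

/-- A function on a countable set vanishes at infinity if, for every `ε > 0`,
the set where `|f| ≥ ε` is finite. -/
def VanishesAtInfty {V : Type*} (f : V → ℝ) : Prop :=
  ∀ ε > (0 : ℝ), {x | ε ≤ |f x|}.Finite

/-- `(X, b, m)` is a weighted graph: nonnegative symmetric edge weight with vanishing
diagonal, locally finite, positive measure, connected. -/
def IsWeightedGraph {V : Type*} (b : V → V → ℝ) (m : V → ℝ) : Prop :=
  (∀ x y, 0 ≤ b x y) ∧ (∀ x y, b x y = b y x) ∧ (∀ x, b x x = 0) ∧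
    (∀ x, {y | 0 < b x y}.Finite) ∧ (∀ x, 0 < m x) ∧
    (∀ x y, Relation.ReflTransGen (fun a c => 0 < b a c) x y)

/-- The formal graph Laplacian `𝓛f(x) = (1/m x) ∑_y b x y (f x − f y)`. -/
noncomputable def lap {V : Type*} (b : V → V → ℝ) (m : V → ℝ) (f : V → ℝ) (x : V) : ℝ :=
  (1 / m x) * ∑' y, b x y * (f x - f y)

/-- The weighted degree `Deg(x) = (1/m x) ∑_y b x y`. -/
noncomputable def deg {V : Type*} (b : V → V → ℝ) (m : V → ℝ) (x : V) : ℝ :=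
  (1 / m x) * ∑' y, b x y

/-- `π : (X̃, b̃, m̃) → (X, b, m)` is a regular covering of weighted graphs with deck
transformation group `Γ`: `π` is surjective, maps the neighbourhood of each `x̃`
bijectively onto the neighbourhood of `π x̃`, the weights and measures are compatible,
every `γ ∈ Γ` is an automorphism over `π`, and `Γ` acts transitively on each fiber. -/
def IsRegularCovering {X Xc : Type*} (b : X → X → ℝ) (m : X → ℝ)
    (bc : Xc → Xc → ℝ) (mc : Xc → ℝ) (π : Xc → X)
    (Γ : Subgroup (Equiv.Perm Xc)) : Prop :=
  Function.Surjective π ∧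
    (∀ xc, Set.BijOn π {yc | 0 < bc xc yc} {y | 0 < b (π xc) y}) ∧
    (∀ xc yc, 0 < bc xc yc → bc xc yc = b (π xc) (π yc)) ∧
    (∀ xc, mc xc = m (π xc)) ∧
    (∀ γ ∈ Γ, ∀ xc, π (γ xc) = π xc) ∧
    (∀ γ ∈ Γ, ∀ xc yc, bc (γ xc) (γ yc) = bc xc yc) ∧
    (∀ xc yc, π xc = π yc → ∃ γ ∈ Γ, γ xc = yc)

open scoped ENNReal

/-- The diagonal Green's function `g(x,x) = ∫₀^∞ p_t(x,x) dt`, valued in `[0,∞]`. -/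
noncomputable def greenDiag {V : Type*} (p : ℝ → V → V → ℝ) (x : V) : ℝ≥0∞ :=
  ∫⁻ t in Set.Ioi (0 : ℝ), ENNReal.ofReal (p t x x)

/-- Uniform transience and coverings: (a) the Green's function of the cover is dominated
by that of the base, so uniform transience of the base implies uniform transience of the
cover; (b) for an `n`-sheeted covering with `Γ`-invariant positive semidefinite cover
kernel, `g(x,x) ≤ n·g̃(x̃,x̃)`, so uniform transience of the cover implies that of the
base. -/
theorem stmt16 {X Xc : Type*} [Countable X] [Countable Xc]
    (b : X → X → ℝ) (m : X → ℝ) (bc : Xc → Xc → ℝ) (mc : Xc → ℝ)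
    (π : Xc → X) (Γ : Subgroup (Equiv.Perm Xc))
    (hwg : IsWeightedGraph b m) (hwgc : IsWeightedGraph bc mc)
    (hcov : IsRegularCovering b m bc mc π Γ)
    (p : ℝ → X → X → ℝ) (pc : ℝ → Xc → Xc → ℝ)
    (hpnn : ∀ t, 0 < t → ∀ x y, 0 ≤ p t x y)
    (hpcnn : ∀ t, 0 < t → ∀ xc yc, 0 ≤ pc t xc yc)
    (hid : ∀ t, 0 < t → ∀ (x y : X) (xc : Xc), π xc = x →
      Summable (fun yc : {yc : Xc // π yc = y} => pc t xc yc.1) ∧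
        p t x y = ∑' yc : {yc : Xc // π yc = y}, pc t xc yc.1) :
    (∀ xc : Xc, greenDiag pc xc ≤ greenDiag p (π xc)) ∧
    (∀ C : ℝ, 0 < C → (∀ x : X, greenDiag p x ≤ ENNReal.ofReal C) →
      ∀ xc : Xc, greenDiag pc xc ≤ ENNReal.ofReal C) ∧
    (∀ n : ℕ, 0 < n →
      (∀ x : X, {yc : Xc | π yc = x}.Finite ∧ {yc : Xc | π yc = x}.ncard = n) →
      (∀ γ ∈ Γ, ∀ t, 0 < t → ∀ a c, pc t (γ a) (γ c) = pc t a c) →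
      (∀ t, 0 < t → ∀ f : Xc → ℝ, (Function.support f).Finite →
        0 ≤ ∑' a, ∑' c, pc t a c * f a * f c * mc a * mc c) →
      (∀ (x : X) (xc : Xc), π xc = x → greenDiag p x ≤ n * greenDiag pc xc) ∧
      (∀ C : ℝ, 0 < C → (∀ xc : Xc, greenDiag pc xc ≤ ENNReal.ofReal C) →
        ∀ x : X, greenDiag p x ≤ n * ENNReal.ofReal C)) := by
  obtain ⟨hbnn, hbsymm, hbdiag, hbloc, hmpos, hconn⟩ := hwgc
  obtain ⟨hπsurj, hbij, hbcb, hmcm, hπγ, hbγ, htrans⟩ := hcov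
  classical
  -- Freeness of the deck action: a deck transformation with a fixed point is the identity.
  have hfree : ∀ γ ∈ Γ, ∀ xc : Xc, γ xc = xc → ∀ zc : Xc, γ zc = zc := by
    intro γ hγ xc hfix zc
    have h := hconn xc zc
    induction h with
    | refl => exact hfix
    | @tail u v hu huv ih =>
      have h1 : 0 < bc u (γ v) := by
        have h2 := hbγ γ hγ u v
        rw [ih] at h2
        rw [h2]; exact huv
      exact (hbij u).injOn h1 huv (hπγ γ hγ v)
  -- (a) pointwise bound
  have keya : ∀ t, 0 < t → ∀ xc : Xc, pc t xc xc ≤ p t (π xc) (π xc) := by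
    intro t ht xc
    obtain ⟨hs, he⟩ := hid t ht (π xc) (π xc) xc rfl
    rw [he]
    exact Summable.le_tsum hs ⟨xc, rfl⟩ (fun j _ => hpcnn t ht _ _)
  have parta : ∀ xc : Xc, greenDiag pc xc ≤ greenDiag p (π xc) := by
    intro xc
    refine MeasureTheory.lintegral_mono_ae ?_
    filter_upwards [MeasureTheory.ae_restrict_mem measurableSet_Ioi] with t ht
    exact ENNReal.ofReal_le_ofReal (keya t ht xc)
  refine ⟨parta, fun C hC hg xc => (parta xc).trans (hg (π xc)), ?_⟩
  intro n hn hfib hinv hpsd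
  -- Cauchy–Schwarz type pair inequality from positive semidefiniteness
  have hpair : ∀ t, 0 < t → ∀ a c : Xc, a ≠ c →
      pc t a c + pc t c a ≤ pc t a a + pc t c c := by
    intro t ht a c hac
    have hma : mc a ≠ 0 := (hmpos a).ne'
    have hmc : mc c ≠ 0 := (hmpos c).ne'
    set f : Xc → ℝ := fun z => if z = a then 1 / mc a else if z = c then -(1 / mc c) else 0
      with hfdef
    have hfa : f a = 1 / mc a := by simp [hfdef]
    have hfc : f c = -(1 / mc c) := by simp [hfdef, Ne.symm hac]
    have hfz : ∀ z, z ≠ a → z ≠ c → f z = 0 := by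
      intro z h1 h2; simp [hfdef, h1, h2]
    have hsupp : (Function.support f).Finite := by
      apply Set.Finite.subset (Set.toFinite ({a, c} : Set Xc))
      intro z hz
      by_contra h
      simp only [Set.mem_insert_iff, Set.mem_singleton_iff, not_or] at h
      exact hz (hfz z h.1 h.2)
    have h0 := hpsd t ht f hsupp
    have hinner : ∀ u, (∑' v, pc t u v * f u * f v * mc u * mc v)
        = pc t u a * f u * f a * mc u * mc a + pc t u c * f u * f c * mc u * mc c := by
      intro u
      rw [tsum_eq_sum (s := ({a, c} : Finset Xc)) (by
        intro z hz
        simp only [Finset.mem_insert, Finset.mem_singleton, not_or] at hz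
        rw [hfz z hz.1 hz.2]; ring)]
      rw [Finset.sum_pair hac]
    rw [tsum_congr hinner] at h0
    rw [tsum_eq_sum (s := ({a, c} : Finset Xc)) (by
      intro z hz
      simp only [Finset.mem_insert, Finset.mem_singleton, not_or] at hz
      rw [hfz z hz.1 hz.2]; ring)] at h0
    rw [Finset.sum_pair hac, hfa, hfc] at h0
    have e1 : pc t a a * (1 / mc a) * (1 / mc a) * mc a * mc a = pc t a a := by field_simp; try ring
    have e2 : pc t a c * (1 / mc a) * (-(1 / mc c)) * mc a * mc c = -(pc t a c) := by field_simp; try ring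
    have e3 : pc t c a * (-(1 / mc c)) * (1 / mc a) * mc c * mc a = -(pc t c a) := by field_simp; try ring
    have e4 : pc t c c * (-(1 / mc c)) * (-(1 / mc c)) * mc c * mc c = pc t c c := by field_simp; try ring
    rw [e1, e2, e3, e4] at h0
    linarith
  -- the key pointwise bound for (b)
  have keyb : ∀ t, 0 < t → ∀ (x : X) (xc : Xc), π xc = x → p t x x ≤ n * pc t xc xc := by
    intro t ht x xc hxc
    obtain ⟨hFfin, hFcard⟩ := hfib x
    obtain ⟨hs, he⟩ := hid t ht x x xc hxc
    have hch : ∀ yc : Xc, π yc = x → ∃ γ : Equiv.Perm Xc, γ ∈ Γ ∧ γ xc = yc := by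
      intro yc hyc
      obtain ⟨γ, hγ, hγx⟩ := htrans xc yc (by rw [hxc, hyc])
      exact ⟨γ, hγ, hγx⟩
    choose! γf hγfΓ hγfx using hch
    set σ : Xc → Xc := fun yc => (γf yc)⁻¹ xc with hσ
    have hσfib : ∀ yc, π yc = x → π (σ yc) = x := by
      intro yc hyc
      have hmem : ((γf yc)⁻¹ : Equiv.Perm Xc) ∈ Γ := inv_mem (hγfΓ yc hyc)
      exact (hπγ _ hmem xc).trans hxc
    have hinjσ : Set.InjOn σ {yc | π yc = x} := by
      intro y hy z hz hyz
      have hyx : π y = x := hy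
      have hzx : π z = x := hz
      have hδΓ : (γf z * (γf y)⁻¹ : Equiv.Perm Xc) ∈ Γ :=
        mul_mem (hγfΓ z hzx) (inv_mem (hγfΓ y hyx))
      have hδfix : (γf z * (γf y)⁻¹ : Equiv.Perm Xc) xc = xc := by
        have hyz' : ((γf y)⁻¹ : Equiv.Perm Xc) xc = ((γf z)⁻¹ : Equiv.Perm Xc) xc := hyz
        simp [Equiv.Perm.mul_apply, hyz', Equiv.Perm.coe_inv, Equiv.apply_symm_apply]
      have h1 : (γf z * (γf y)⁻¹ : Equiv.Perm Xc) (γf y xc) = γf y xc :=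
        hfree _ hδΓ xc hδfix _
      have h2 : (γf z * (γf y)⁻¹ : Equiv.Perm Xc) (γf y xc) = γf z xc := by
        simp [Equiv.Perm.mul_apply]
      have h3 : γf z xc = γf y xc := h2.symm.trans h1
      rw [hγfx z hzx, hγfx y hyx] at h3
      exact h3.symm
    have hmaps : Set.MapsTo σ {yc | π yc = x} {yc | π yc = x} := fun y hy => hσfib y hy
    have hbijσ : Set.BijOn σ {yc | π yc = x} {yc | π yc = x} :=
      (hFfin.injOn_iff_bijOn_of_mapsTo hmaps).mp hinjσ
    set F : Finset Xc := hFfin.toFinset with hF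
    have htsum : p t x x = ∑ yc ∈ F, pc t xc yc := by
      rw [he]
      haveI : Fintype {yc : Xc // π yc = x} := hFfin.fintype
      rw [tsum_fintype]
      exact Finset.sum_bij (fun a _ => a.1) (fun a _ => hFfin.mem_toFinset.mpr a.2)
        (fun a _ b _ h => Subtype.ext h)
        (fun b hb => ⟨⟨b, hFfin.mem_toFinset.mp hb⟩, Finset.mem_univ _, rfl⟩)
        (fun a _ => rfl)
    have hflip : ∀ yc ∈ F, pc t yc xc = pc t xc (σ yc) := by
      intro yc hyc
      have hyx : π yc = x := hFfin.mem_toFinset.mp hyc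
      have h3 := hinv (γf yc) (hγfΓ yc hyx) t ht xc (((γf yc)⁻¹ : Equiv.Perm Xc) xc)
      rw [hγfx yc hyx, (Equiv.Perm.eq_inv_iff_eq (f := γf yc) (y := xc)).mp rfl] at h3
      simpa only [hσ] using h3
    have hdiag : ∀ yc, π yc = x → pc t yc yc = pc t xc xc := by
      intro yc hyx
      have h4 := hinv (γf yc) (hγfΓ yc hyx) t ht xc xc
      rw [hγfx yc hyx] at h4
      exact h4
    have hsum2 : ∑ yc ∈ F, pc t xc (σ yc) = ∑ yc ∈ F, pc t xc yc := by
      refine Finset.sum_bij (fun yc _ => σ yc) ?_ ?_ ?_ ?_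
      · intro a ha; exact hFfin.mem_toFinset.mpr (hσfib a (hFfin.mem_toFinset.mp ha))
      · intro a1 h1 a2 h2 h
        exact hinjσ (hFfin.mem_toFinset.mp h1) (hFfin.mem_toFinset.mp h2) h
      · intro b hb
        obtain ⟨a, ha, hab⟩ := hbijσ.surjOn (hFfin.mem_toFinset.mp hb)
        exact ⟨a, hFfin.mem_toFinset.mpr ha, hab⟩
      · intro a _; rfl
    have hflipsum : ∑ yc ∈ F, pc t yc xc = ∑ yc ∈ F, pc t xc yc :=
      (Finset.sum_congr rfl hflip).trans hsum2
    have hcardF : F.card = n := by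
      rw [hF, ← Set.ncard_eq_toFinset_card _ hFfin]; exact hFcard
    have h1 : ∀ yc ∈ F, pc t xc yc + pc t yc xc ≤ 2 * pc t xc xc := by
      intro yc hyc
      have hyx : π yc = x := hFfin.mem_toFinset.mp hyc
      by_cases hne : xc = yc
      · subst hne; linarith
      · have hp := hpair t ht xc yc hne
        have hd := hdiag yc hyx
        linarith
    have hmain : 2 * p t x x ≤ 2 * (n * pc t xc xc) := by
      calc 2 * p t x x = ∑ yc ∈ F, (pc t xc yc + pc t yc xc) := by
            rw [Finset.sum_add_distrib, hflipsum, ← htsum]; ring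
        _ ≤ ∑ _yc ∈ F, 2 * pc t xc xc := Finset.sum_le_sum h1
        _ = 2 * (n * pc t xc xc) := by
            rw [Finset.sum_const, hcardF, nsmul_eq_mul]; ring
    linarith
  have partb1 : ∀ (x : X) (xc : Xc), π xc = x → greenDiag p x ≤ n * greenDiag pc xc := by
    intro x xc hxc
    have hle : greenDiag p x ≤
        ∫⁻ t in Set.Ioi (0 : ℝ), (n : ℝ≥0∞) * ENNReal.ofReal (pc t xc xc) := by
      refine MeasureTheory.lintegral_mono_ae ?_
      filter_upwards [MeasureTheory.ae_restrict_mem measurableSet_Ioi] with t ht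
      calc ENNReal.ofReal (p t x x) ≤ ENNReal.ofReal ((n : ℝ) * pc t xc xc) :=
            ENNReal.ofReal_le_ofReal (keyb t ht x xc hxc)
        _ = (n : ℝ≥0∞) * ENNReal.ofReal (pc t xc xc) := by
            rw [ENNReal.ofReal_mul (by positivity), ENNReal.ofReal_natCast]
    rwa [MeasureTheory.lintegral_const_mul' _ _ (ENNReal.natCast_ne_top n)] at hle
  refine ⟨partb1, fun C hC hg x => ?_⟩
  obtain ⟨xc, hxc⟩ := hπsurj x
  exact (partb1 x xc hxc).trans (mul_le_mul_right (hg xc) n)
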